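/- arXiv:1203.2287 — 3 statements merged into one kernel-verified Lean document; each statement's English description precedes it below -/
import Mathlib

section
/- Let A* = {s ∈ {1,…,k} : π(s) > 0 and PD(s) > c_N/(c_N+c_D)}. Assume that for every grade s with π(s) > 0 one has PD(s) ≠ c_N/(c_N+c_D). Then any set A ⊆ {1,…,k} with C(A) = C(A*) satisfies A ∩ {s : π(s) > 0} = A* ∩ {s : π(s) > 0}; that is, the minimizer of the expected misclassification cost is unique up to grades of zero unconditional probability. -/
open Finset

/-- If `PD(s) ≠ c_N/(c_N+c_D)` whenever `π(s) > 0`, then the minimizer of the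
expected misclassification cost is unique up to grades of zero unconditional probability. -/
theorem natural_classification_set_unique_minimizer
    (k : ℕ) (p cD cN : ℝ) (ℓD ℓN : ℕ → ℝ)
    (hp0 : 0 < p) (hp1 : p < 1) (hcD : 0 < cD) (hcN : 0 < cN)
    (hℓD : ∀ s ∈ Finset.Icc 1 k, 0 ≤ ℓD s ∧ ℓD s ≤ 1)
    (hℓN : ∀ s ∈ Finset.Icc 1 k, 0 ≤ ℓN s ∧ ℓN s ≤ 1)
    (hℓDsum : ∑ s ∈ Finset.Icc 1 k, ℓD s = 1)
    (hℓNsum : ∑ s ∈ Finset.Icc 1 k, ℓN s = 1)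
    (π : ℕ → ℝ) (hπ : ∀ s, π s = p * ℓD s + (1 - p) * ℓN s)
    (PD : ℕ → ℝ) (hPD : ∀ s, 0 < π s → PD s = p * ℓD s / π s)
    (hne : ∀ s ∈ Finset.Icc 1 k, 0 < π s → PD s ≠ cN / (cN + cD))
    (C : Finset ℕ → ℝ)
    (hC : ∀ A, C A = cD * p * ∑ s ∈ Finset.Icc 1 k \ A, ℓD s
                    + cN * (1 - p) * ∑ s ∈ A, ℓN s)
    (Astar : Finset ℕ)
    (hAstar : Astar = (Finset.Icc 1 k).filter
        (fun s => 0 < π s ∧ PD s > cN / (cN + cD))) :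
    ∀ A ⊆ Finset.Icc 1 k, C A = C Astar →
      A.filter (fun s => 0 < π s) = Astar.filter (fun s => 0 < π s) := by
  intro A hA hCA
  set g : ℕ → ℝ := fun s => cN * (1 - p) * ℓN s - cD * p * ℓD s with hg
  have hp1' : 0 < 1 - p := by linarith
  have hcDN : 0 < cN + cD := by linarith
  -- characterization of Astar membership on Icc
  have hgiff : ∀ s ∈ Finset.Icc 1 k, ((0 < π s ∧ PD s > cN / (cN + cD)) ↔ g s < 0) := by
    intro s hs
    have hD0 : 0 ≤ ℓD s := (hℓD s hs).1
    have hN0 : 0 ≤ ℓN s := (hℓN s hs).1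
    constructor
    · rintro ⟨hπs, hPDs⟩
      rw [hPD s hπs, gt_iff_lt, div_lt_div_iff₀ hcDN hπs, hπ s] at hPDs
      simp only [hg]
      nlinarith
    · intro hgs
      have hDpos : 0 < ℓD s := by
        by_contra h
        push_neg at h
        have hD0' : ℓD s = 0 := le_antisymm h hD0
        simp only [hg, hD0'] at hgs
        nlinarith [mul_nonneg (mul_nonneg hcN.le hp1'.le) hN0]
      have hπs : 0 < π s := by rw [hπ s]; nlinarith
      refine ⟨hπs, ?_⟩
      rw [hPD s hπs, gt_iff_lt, div_lt_div_iff₀ hcDN hπs, hπ s]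
      simp only [hg] at hgs
      nlinarith
  have hAstarIcc : Astar ⊆ Finset.Icc 1 k := by
    rw [hAstar]; exact Finset.filter_subset _ _
  have hAstarN : Astar = (Finset.Icc 1 k).filter (fun s => g s < 0) := by
    rw [hAstar]
    apply Finset.filter_congr
    intro s hs
    simpa using hgiff s hs
  -- cost formula
  have key : ∀ B ⊆ Finset.Icc 1 k, C B = cD * p + ∑ s ∈ B, g s := by
    intro B hB
    rw [hC B, Finset.sum_sdiff_eq_sub hB, hℓDsum]
    simp only [hg]
    rw [Finset.sum_sub_distrib, ← Finset.mul_sum, ← Finset.mul_sum]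
    ring
  have hsum : ∑ s ∈ A, g s = ∑ s ∈ Astar, g s := by
    have h1 := key A hA
    have h2 := key Astar hAstarIcc
    rw [h1, h2] at hCA
    linarith
  -- split A
  have hsplit := Finset.sum_filter_add_sum_filter_not A (fun s => g s < 0) g
  have hsubN : A.filter (fun s => g s < 0) ⊆ Astar := by
    rw [hAstarN]
    intro s hs
    rw [Finset.mem_filter] at hs ⊢
    exact ⟨hA hs.1, hs.2⟩
  have hNsplit := Finset.sum_sdiff hsubN (f := g)
  -- sum over Astar \ A.filter is ≤ 0, each term < 0
  have hneg : ∀ s ∈ Astar \ A.filter (fun s => g s < 0), g s ≤ 0 := by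
    intro s hs
    rw [Finset.mem_sdiff, hAstarN, Finset.mem_filter] at hs
    exact le_of_lt hs.1.2
  have hpos : ∀ s ∈ A.filter (fun s => ¬ g s < 0), 0 ≤ g s := by
    intro s hs
    rw [Finset.mem_filter] at hs
    exact not_lt.mp hs.2
  have hsum1 : ∑ s ∈ Astar \ A.filter (fun s => g s < 0), g s ≤ 0 :=
    Finset.sum_nonpos hneg
  have hsum2 : 0 ≤ ∑ s ∈ A.filter (fun s => ¬ g s < 0), g s :=
    Finset.sum_nonneg hpos
  -- equality forces both sums to be zero
  have heq1 : ∑ s ∈ Astar \ A.filter (fun s => g s < 0), g s = 0 := by linarith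
  have heq2 : ∑ s ∈ A.filter (fun s => ¬ g s < 0), g s = 0 := by linarith
  have hempty : Astar \ A.filter (fun s => g s < 0) = ∅ := by
    by_contra h
    obtain ⟨s, hs⟩ := Finset.nonempty_iff_ne_empty.mpr h
    have hz := (Finset.sum_eq_zero_iff_of_nonpos hneg).mp heq1 s hs
    rw [Finset.mem_sdiff, hAstarN, Finset.mem_filter] at hs
    linarith [hs.1.2]
  have hNsubA : Astar ⊆ A := by
    intro s hs
    have : s ∈ A.filter (fun s => g s < 0) := by
      by_contra h
      have : s ∈ Astar \ A.filter (fun s => g s < 0) := Finset.mem_sdiff.mpr ⟨hs, h⟩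
      rw [hempty] at this
      exact absurd this (Finset.notMem_empty s)
    exact (Finset.mem_filter.mp this).1
  have hzero : ∀ s ∈ A.filter (fun s => ¬ g s < 0), g s = 0 :=
    (Finset.sum_eq_zero_iff_of_nonneg hpos).mp heq2
  ext s
  simp only [Finset.mem_filter]
  constructor
  · rintro ⟨hsA, hπs⟩
    have hsIcc := hA hsA
    refine ⟨?_, hπs⟩
    by_contra hsN
    have hgs : ¬ g s < 0 := by
      intro hlt
      exact hsN (by rw [hAstarN, Finset.mem_filter]; exact ⟨hsIcc, hlt⟩)
    have hg0 : g s = 0 := hzero s (Finset.mem_filter.mpr ⟨hsA, hgs⟩)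
    apply hne s hsIcc hπs
    rw [hPD s hπs]
    rw [div_eq_div_iff hπs.ne' hcDN.ne', hπ s]
    simp only [hg] at hg0
    nlinarith
  · rintro ⟨hsAst, hπs⟩
    exact ⟨hNsubA hsAst, hπs⟩
end

section
/- Assume ℓ_N(s) > 0 for all s ∈ {1,…,k} and that the likelihood ratio s ↦ ℓ_D(s)/ℓ_N(s) is nonincreasing in s. Define the conditional cumulative distribution functions F_D(s) = Σ_{t≤s} ℓ_D(t) and F_N(s) = Σ_{t≤s} ℓ_N(t) for s ∈ {0,1,…,k} (with F_D(0) = F_N(0) = 0). Then the minimum over all sets A ⊆ {1,…,k} of the quantity Σ_{s∉A} ℓ_D(s) + Σ_{s∈A} ℓ_N(s) (the expected misclassification cost for cost parameters c_D = 1/p, c_N = 1/(1−p)) equals 1 − max_{0≤s≤k} |F_D(s) − F_N(s)|, i.e. one minus the Kolmogorov–Smirnov distance between the two conditional distributions. -/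
open Finset

/-- Under a nonincreasing likelihood ratio, the minimal expected
misclassification cost (with cost parameters `c_D = 1/p`, `c_N = 1/(1−p)`, i.e. the minimum
over sets `A` of `Σ_{s∉A} ℓ_D(s) + Σ_{s∈A} ℓ_N(s)`) equals one minus the Kolmogorov–Smirnov
distance between the two conditional rating distributions. -/
theorem min_cost_eq_one_sub_kolmogorov_smirnov
    (k : ℕ) (ℓD ℓN : ℕ → ℝ)
    (hℓD : ∀ s ∈ Finset.Icc 1 k, 0 ≤ ℓD s ∧ ℓD s ≤ 1)
    (hℓN : ∀ s ∈ Finset.Icc 1 k, 0 ≤ ℓN s ∧ ℓN s ≤ 1)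
    (hℓDsum : ∑ s ∈ Finset.Icc 1 k, ℓD s = 1)
    (hℓNsum : ∑ s ∈ Finset.Icc 1 k, ℓN s = 1)
    (hℓNpos : ∀ s ∈ Finset.Icc 1 k, 0 < ℓN s)
    (hmono : ∀ s ∈ Finset.Icc 1 k, ∀ t ∈ Finset.Icc 1 k,
        s ≤ t → ℓD t / ℓN t ≤ ℓD s / ℓN s)
    (FD FN : ℕ → ℝ)
    (hFD : ∀ s, FD s = ∑ t ∈ Finset.Icc 1 s, ℓD t)
    (hFN : ∀ s, FN s = ∑ t ∈ Finset.Icc 1 s, ℓN t) :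
    IsLeast
      {c : ℝ | ∃ A ⊆ Finset.Icc 1 k,
        c = ∑ s ∈ Finset.Icc 1 k \ A, ℓD s + ∑ s ∈ A, ℓN s}
      (1 - (Finset.Icc 0 k).sup' (Finset.nonempty_Icc.mpr (Nat.zero_le k))
            (fun s => |FD s - FN s|)) := by
  classical
  set D : ℕ → ℝ := fun s => ℓD s - ℓN s with hD
  set P : Finset ℕ := (Finset.Icc 1 k).filter (fun s => ℓN s ≤ ℓD s) with hPdef
  have hPsub : P ⊆ Finset.Icc 1 k := filter_subset _ _
  -- cost identity
  have hcost : ∀ A ⊆ Finset.Icc 1 k,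
      ∑ s ∈ Finset.Icc 1 k \ A, ℓD s + ∑ s ∈ A, ℓN s
        = 1 - ∑ s ∈ A, D s := by
    intro A hA
    rw [Finset.sum_sdiff_eq_sub hA, hℓDsum, Finset.sum_sub_distrib]
    ring
  -- P maximizes the sum of D
  have hAle : ∀ A ⊆ Finset.Icc 1 k, ∑ s ∈ A, D s ≤ ∑ s ∈ P, D s := by
    intro A hA
    have h1 : ∑ s ∈ A, D s ≤ ∑ s ∈ A.filter (fun s => ℓN s ≤ ℓD s), D s := by
      rw [← Finset.sum_filter_add_sum_filter_not A (fun s => ℓN s ≤ ℓD s)]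
      have : ∑ s ∈ A.filter (fun s => ¬ ℓN s ≤ ℓD s), D s ≤ 0 := by
        apply Finset.sum_nonpos
        intro s hs
        have := (Finset.mem_filter.mp hs).2
        simp only [hD]; linarith [le_of_not_ge this]
      linarith
    have h2 : A.filter (fun s => ℓN s ≤ ℓD s) ⊆ P := by
      intro s hs
      rw [Finset.mem_filter] at hs ⊢
      exact ⟨hA hs.1, hs.2⟩
    have h3 := Finset.sum_le_sum_of_subset_of_nonneg h2 (by
      intro s hs hns
      have h := (Finset.mem_filter.mp hs).2
      show (0:ℝ) ≤ ℓD s - ℓN s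
      linarith)
    linarith
  -- P is a down-set: P = Icc 1 m
  set m : ℕ := if h : P.Nonempty then P.max' h else 0 with hm
  have hPeq : P = Finset.Icc 1 m := by
    by_cases h : P.Nonempty
    · simp only [hm, dif_pos h]
      ext s
      constructor
      · intro hs
        rw [Finset.mem_Icc]
        exact ⟨(Finset.mem_Icc.mp (hPsub hs)).1, Finset.le_max' _ _ hs⟩
      · intro hs
        obtain ⟨h1s, hsM⟩ := Finset.mem_Icc.mp hs
        have hM := P.max'_mem h
        have hM' := Finset.mem_filter.mp hM
        have hMk := Finset.mem_Icc.mp hM'.1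
        have hsk : s ∈ Finset.Icc 1 k := Finset.mem_Icc.mpr ⟨h1s, le_trans hsM hMk.2⟩
        rw [hPdef, Finset.mem_filter]
        refine ⟨hsk, ?_⟩
        have hmon := hmono s hsk _ hM'.1 hsM
        have hNs := hℓNpos s hsk
        have hNm := hℓNpos _ hM'.1
        have h1 : (1 : ℝ) ≤ ℓD (P.max' h) / ℓN (P.max' h) :=
          (one_le_div hNm).mpr hM'.2
        have h2 : (1 : ℝ) ≤ ℓD s / ℓN s := le_trans h1 hmon
        exact (one_le_div hNs).mp h2
    · rw [Finset.not_nonempty_iff_eq_empty] at h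
      simp [hm, h]
  have hmk : m ∈ Finset.Icc 0 k := by
    simp only [Finset.mem_Icc]
    refine ⟨Nat.zero_le _, ?_⟩
    by_cases h : P.Nonempty
    · have hM := P.max'_mem h
      have := Finset.mem_Icc.mp (hPsub hM)
      simp only [hm, dif_pos h]
      exact this.2
    · simp [hm, h]
  have hPval : ∑ s ∈ P, D s = FD m - FN m := by
    rw [hPeq, hFD, hFN, Finset.sum_sub_distrib]
  have hPnonneg : 0 ≤ ∑ s ∈ P, D s := by
    apply Finset.sum_nonneg
    intro s hs
    have := (Finset.mem_filter.mp hs).2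
    simp only [hD]; linarith
  have hDtot : ∑ s ∈ Finset.Icc 1 k, D s = 0 := by
    rw [Finset.sum_sub_distrib, hℓDsum, hℓNsum]; ring
  -- sup' = ∑_P D
  have hsup : (Finset.Icc 0 k).sup' (Finset.nonempty_Icc.mpr (Nat.zero_le k))
      (fun s => |FD s - FN s|) = ∑ s ∈ P, D s := by
    apply le_antisymm
    · apply Finset.sup'_le
      intro s hs
      have hsk := (Finset.mem_Icc.mp hs).2
      have hsub : Finset.Icc 1 s ⊆ Finset.Icc 1 k := by
        apply Finset.Icc_subset_Icc_right hsk
      have hFDs : FD s - FN s = ∑ t ∈ Finset.Icc 1 s, D t := by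
        rw [hFD, hFN, Finset.sum_sub_distrib]
      have h1 : FD s - FN s ≤ ∑ t ∈ P, D t := hFDs ▸ hAle _ hsub
      have h2 : FN s - FD s ≤ ∑ t ∈ P, D t := by
        have hsd := Finset.sum_sdiff_eq_sub (f := D) hsub
        have := hAle (Finset.Icc 1 k \ Finset.Icc 1 s) (Finset.sdiff_subset)
        rw [hsd, hDtot] at this
        have : -(∑ t ∈ Finset.Icc 1 s, D t) ≤ ∑ t ∈ P, D t := by linarith
        linarith [hFDs]
      exact abs_sub_le_iff.mpr ⟨h1, h2⟩
    · have h1 : ∑ s ∈ P, D s ≤ |FD m - FN m| := by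
        rw [hPval]; exact le_abs_self _
      exact h1.trans (Finset.le_sup' (fun s => |FD s - FN s|) hmk)
  constructor
  · exact ⟨P, hPsub, by rw [hcost P hPsub, hsup]⟩
  · rintro c ⟨A, hA, rfl⟩
    rw [hcost A hA, hsup]
    linarith [hAle A hA]
end

section
/- Let k ≥ 1, let π : {1,…,k} → [0,1] satisfy Σ_s π(s) = 1, let q : {1,…,k} → [0,1] be a PD curve, and set p = Σ_s q(s)·π(s), assumed to lie in (0,1). Define conditional probability mass functions ℓ_D(s) = q(s)·π(s)/p and ℓ_N(s) = (1−q(s))·π(s)/(1−p), and let S_D, S_N be independent random variables on {1,…,k} with mass functions ℓ_D and ℓ_N respectively. Then the accuracy ratio AR = P[S_D < S_N] − P[S_D > S_N] satisfies AR = (1/(p(1−p)))·( 2·Σ_{s=1}^k (1−q(s))·π(s)·Σ_{t=1}^{s−1} q(t)·π(t) + Σ_{s=1}^k q(s)·(1−q(s))·π(s)² ) − 1. -/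
open MeasureTheory ProbabilityTheory Finset

lemma pair_prob_rel {Ω : Type*} [MeasurableSpace Ω] (P : Measure Ω) [IsProbabilityMeasure P]
    (F : Finset ℕ) (X Y : Ω → ℕ) (hX : Measurable X) (hY : Measurable Y)
    (hindep : IndepFun X Y P) (f g : ℕ → ℝ)
    (hXlaw : ∀ s, (P {ω | X ω = s}).toReal = if s ∈ F then f s else 0)
    (hYlaw : ∀ s, (P {ω | Y ω = s}).toReal = if s ∈ F then g s else 0)
    (hfsum : ∑ s ∈ F, f s = 1) (hgsum : ∑ s ∈ F, g s = 1)
    (r : ℕ → ℕ → Prop) [DecidableRel r] :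
    (P {ω | r (X ω) (Y ω)}).toReal
      = ∑ s ∈ F, ∑ t ∈ F, if r s t then f s * g t else 0 := by
  have key : ∀ (Z : Ω → ℕ) (h : ℕ → ℝ), Measurable Z →
      (∀ s, (P {ω | Z ω = s}).toReal = if s ∈ F then h s else 0) →
      (∑ s ∈ F, h s = 1) → P {ω | Z ω ∈ F}ᶜ = 0 := by
    intro Z h hZ hlaw hsum
    have hU : {ω | Z ω ∈ F} = ⋃ s ∈ F, Z ⁻¹' {s} := by
      ext ω; simp
    have hmeas : P {ω | Z ω ∈ F} = ∑ s ∈ F, P (Z ⁻¹' {s}) := by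
      rw [hU]
      exact measure_biUnion_finset
        (fun s _ t _ hst => Set.disjoint_left.2
          (fun ω h1 h2 => hst ((Set.mem_singleton_iff.1 h1).symm.trans h2)))
        (fun s _ => hZ (measurableSet_singleton s))
    have htr : (P {ω | Z ω ∈ F}).toReal = 1 := by
      rw [hmeas, ENNReal.toReal_sum (fun s _ => measure_ne_top P _)]
      rw [← hsum]
      refine Finset.sum_congr rfl (fun s hs => ?_)
      have : Z ⁻¹' {s} = {ω | Z ω = s} := rfl
      rw [this, hlaw s, if_pos hs]
    have h1 : P {ω | Z ω ∈ F} = 1 := (ENNReal.toReal_eq_one_iff _).1 htr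
    have : MeasurableSet {ω | Z ω ∈ F} := hZ (Finset.measurableSet F)
    rw [measure_compl this (measure_ne_top P _), h1, measure_univ, tsub_self]
  set A := {ω | X ω ∈ F} ∩ {ω | Y ω ∈ F} with hA
  have hAc : P Aᶜ = 0 := by
    rw [hA, Set.compl_inter]
    exact measure_union_null (key X f hX hXlaw hfsum) (key Y g hY hYlaw hgsum)
  have h1 : P {ω | r (X ω) (Y ω)} = P ({ω | r (X ω) (Y ω)} ∩ A) :=
    (measure_inter_conull hAc).symm
  set S : ℕ × ℕ → Set Ω := fun st =>
    if r st.1 st.2 then X ⁻¹' {st.1} ∩ Y ⁻¹' {st.2} else (∅ : Set Ω) with hS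
  have h2 : {ω | r (X ω) (Y ω)} ∩ A = ⋃ st ∈ F ×ˢ F, S st := by
    ext ω
    simp only [hS, Set.mem_iUnion, Finset.mem_product, Set.mem_inter_iff, Set.mem_setOf_eq,
      Finset.mem_coe]
    constructor
    · rintro ⟨hr, hx, hy⟩
      exact ⟨(X ω, Y ω), ⟨hx, hy⟩, by simp [hr]⟩
    · rintro ⟨⟨s, t⟩, ⟨hs, ht⟩, hmem⟩
      by_cases hrst : r s t
      · rw [if_pos hrst] at hmem
        obtain ⟨hxs, hyt⟩ := hmem
        have hxs' : X ω = s := hxs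
        have hyt' : Y ω = t := hyt
        refine ⟨by rw [hxs', hyt']; exact hrst, ?_, ?_⟩
        · show X ω ∈ F; rw [hxs']; exact hs
        · show Y ω ∈ F; rw [hyt']; exact ht
      · rw [if_neg hrst] at hmem; exact absurd hmem (Set.notMem_empty ω)
  have hdisj : (↑(F ×ˢ F) : Set (ℕ × ℕ)).PairwiseDisjoint S := by
    intro st _ st' _ hne
    simp only [Function.onFun, hS]
    split_ifs with h1' h2'
    · refine Set.disjoint_left.2 (fun ω hw hw' => hne ?_)
      obtain ⟨hx, hy⟩ := hw
      obtain ⟨hx', hy'⟩ := hw'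
      have : X ω = st.1 := hx
      have e1 : st.1 = st'.1 := this ▸ hx'
      have : Y ω = st.2 := hy
      have e2 : st.2 = st'.2 := this ▸ hy'
      exact Prod.ext e1 e2
    all_goals simp
  have hmeasS : ∀ st ∈ F ×ˢ F, MeasurableSet (S st) := by
    intro st _
    simp only [hS]
    split_ifs
    · exact (hX (measurableSet_singleton _)).inter (hY (measurableSet_singleton _))
    · exact MeasurableSet.empty
  have h3 : P {ω | r (X ω) (Y ω)} = ∑ st ∈ F ×ˢ F, P (S st) := by
    rw [h1, h2]; exact measure_biUnion_finset hdisj hmeasS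
  rw [h3, ENNReal.toReal_sum (fun st _ => measure_ne_top P _), Finset.sum_product]
  refine Finset.sum_congr rfl (fun s hs => Finset.sum_congr rfl (fun t ht => ?_))
  simp only [hS]
  split_ifs with hrst
  · rw [hindep.measure_inter_preimage_eq_mul _ _ (measurableSet_singleton s)
      (measurableSet_singleton t), ENNReal.toReal_mul]
    have e1 : X ⁻¹' {s} = {ω | X ω = s} := rfl
    have e2 : Y ⁻¹' {t} = {ω | Y ω = t} := rfl
    rw [e1, e2, hXlaw s, hYlaw t, if_pos hs, if_pos ht]
  · simp

/-- The accuracy ratio of a discrete rating model, computed from independent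
grade variables `S_D`, `S_N` whose mass functions `ℓ_D(s) = q(s)π(s)/p` and
`ℓ_N(s) = (1−q(s))π(s)/(1−p)` are obtained from the rating profile `π` and the PD curve `q`
by Bayesian inversion, is given by the ex-ante formula
`AR = (1/(p(1−p)))·(2·Σ_s (1−q(s))π(s)·Σ_{t<s} q(t)π(t) + Σ_s q(s)(1−q(s))π(s)²) − 1`. -/
theorem discrete_accuracy_ratio_ex_ante
    {Ω : Type*} [MeasurableSpace Ω] (P : Measure Ω) [IsProbabilityMeasure P]
    (k : ℕ) (hk : 1 ≤ k) (π q : ℕ → ℝ)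
    (hπ : ∀ s ∈ Finset.Icc 1 k, 0 ≤ π s ∧ π s ≤ 1)
    (hπsum : ∑ s ∈ Finset.Icc 1 k, π s = 1)
    (hq : ∀ s ∈ Finset.Icc 1 k, 0 ≤ q s ∧ q s ≤ 1)
    (p : ℝ) (hp : p = ∑ s ∈ Finset.Icc 1 k, q s * π s)
    (hp0 : 0 < p) (hp1 : p < 1)
    (ℓD ℓN : ℕ → ℝ)
    (hℓD : ∀ s, ℓD s = q s * π s / p)
    (hℓN : ∀ s, ℓN s = (1 - q s) * π s / (1 - p))
    (SD SN : Ω → ℕ) (hSDm : Measurable SD) (hSNm : Measurable SN)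
    (hindep : IndepFun SD SN P)
    (hSDlaw : ∀ s : ℕ,
      (P {ω | SD ω = s}).toReal = if s ∈ Finset.Icc 1 k then ℓD s else 0)
    (hSNlaw : ∀ s : ℕ,
      (P {ω | SN ω = s}).toReal = if s ∈ Finset.Icc 1 k then ℓN s else 0)
    (AR : ℝ)
    (hAR : AR = (P {ω | SD ω < SN ω}).toReal - (P {ω | SD ω > SN ω}).toReal) :
    AR = (1 / (p * (1 - p))) *
        (2 * ∑ s ∈ Finset.Icc 1 k,
            (1 - q s) * π s * ∑ t ∈ Finset.Icc 1 (s - 1), q t * π t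
          + ∑ s ∈ Finset.Icc 1 k, q s * (1 - q s) * π s ^ 2) - 1 := by
  set F := Finset.Icc 1 k with hF
  have hpne : p ≠ 0 := ne_of_gt hp0
  have hp1ne : (1 : ℝ) - p ≠ 0 := by linarith
  have hsumD : ∑ s ∈ F, ℓD s = 1 := by
    simp only [hℓD]; rw [← Finset.sum_div, ← hp, div_self hpne]
  have hsumN : ∑ s ∈ F, ℓN s = 1 := by
    simp only [hℓN, sub_mul, one_mul]
    rw [← Finset.sum_div, Finset.sum_sub_distrib, hπsum, ← hp, div_self hp1ne]
  have hlt : (P {ω | SD ω < SN ω}).toReal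
      = ∑ s ∈ F, ∑ t ∈ F, if s < t then ℓD s * ℓN t else 0 :=
    pair_prob_rel P F SD SN hSDm hSNm hindep ℓD ℓN hSDlaw hSNlaw hsumD hsumN (· < ·)
  have hgt : (P {ω | SD ω > SN ω}).toReal
      = ∑ s ∈ F, ∑ t ∈ F, if s > t then ℓD s * ℓN t else 0 :=
    pair_prob_rel P F SD SN hSDm hSNm hindep ℓD ℓN hSDlaw hSNlaw hsumD hsumN (· > ·)
  set c := 1 / (p * (1 - p)) with hc
  have A4 : (∑ s ∈ F, ∑ t ∈ F, if s = t then ℓD s * ℓN t else 0)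
      = c * ∑ s ∈ F, q s * (1 - q s) * π s ^ 2 := by
    rw [Finset.mul_sum]
    refine Finset.sum_congr rfl fun s hs => ?_
    rw [Finset.sum_ite_eq F s fun t => ℓD s * ℓN t, if_pos hs, hℓD, hℓN, hc]
    field_simp
  have A1 : (∑ s ∈ F, ∑ t ∈ F, if s < t then ℓD s * ℓN t else 0)
      = c * ∑ s ∈ F, (1 - q s) * π s * ∑ t ∈ Finset.Icc 1 (s - 1), q t * π t := by
    rw [Finset.sum_comm, Finset.mul_sum]
    refine Finset.sum_congr rfl fun t ht => ?_
    rw [Finset.sum_ite, Finset.sum_const_zero, add_zero]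
    have hfil : F.filter (fun s => s < t) = Finset.Icc 1 (t - 1) := by
      obtain ⟨ht1, ht2⟩ := Finset.mem_Icc.1 ht
      ext x
      simp only [hF, Finset.mem_filter, Finset.mem_Icc]
      omega
    rw [hfil, ← Finset.sum_mul]
    have : ∑ s ∈ Finset.Icc 1 (t - 1), ℓD s
        = (∑ s ∈ Finset.Icc 1 (t - 1), q s * π s) / p := by
      simp only [hℓD]; rw [← Finset.sum_div]
    rw [this, hℓN, hc]
    field_simp
  have A3 : (∑ s ∈ F, ∑ t ∈ F, if s < t then ℓD s * ℓN t else 0)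
      + (∑ s ∈ F, ∑ t ∈ F, if s = t then ℓD s * ℓN t else 0)
      + (∑ s ∈ F, ∑ t ∈ F, if s > t then ℓD s * ℓN t else 0) = 1 := by
    rw [← Finset.sum_add_distrib, ← Finset.sum_add_distrib]
    have : ∀ s ∈ F, ((∑ t ∈ F, if s < t then ℓD s * ℓN t else 0)
        + (∑ t ∈ F, if s = t then ℓD s * ℓN t else 0))
        + (∑ t ∈ F, if s > t then ℓD s * ℓN t else 0)
        = ∑ t ∈ F, ℓD s * ℓN t := by
      intro s _
      rw [← Finset.sum_add_distrib, ← Finset.sum_add_distrib]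
      refine Finset.sum_congr rfl fun t _ => ?_
      rcases Nat.lt_trichotomy s t with h | h | h
      · simp [h, Nat.lt_asymm h, Nat.ne_of_lt h]
      · simp [h, lt_irrefl]
      · simp [h, Nat.lt_asymm h, (Nat.ne_of_lt h).symm]
    rw [Finset.sum_congr rfl this, ← Finset.sum_mul_sum, hsumD, hsumN, one_mul]
  have hG : (∑ s ∈ F, ∑ t ∈ F, if s > t then ℓD s * ℓN t else 0)
      = 1 - c * (∑ s ∈ F, (1 - q s) * π s * ∑ t ∈ Finset.Icc 1 (s - 1), q t * π t)
        - c * ∑ s ∈ F, q s * (1 - q s) * π s ^ 2 := by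
    rw [← A1, ← A4]; linarith [A3]
  rw [hAR, hlt, hgt, A1, hG]
  ring
end
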